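/- Let p ≥ q be positive integers and let H ≤ ℤ² be the subgroup generated by u = (q,0), v = (p,1), and w = (p,-1). Then u is primitive in H (i.e., u = n·h with h ∈ H, n ∈ ℤ implies n = ±1) if and only if q divides 2p. -/

import Mathlib

theorem snowflake_u_primitive_iff (p q : ℤ) (hq : 0 < q) (hpq : q ≤ p) :
    (∀ (n : ℤ) (h : ℤ × ℤ),
        h ∈ AddSubgroup.closure ({(q, 0), (p, 1), (p, -1)} : Set (ℤ × ℤ)) →
        (q, 0) = n • h → n = 1 ∨ n = -1) ↔ q ∣ 2 * p := by
  set S : Set (ℤ × ℤ) := {(q, 0), (p, 1), (p, -1)} with hS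
  constructor
  · intro H
    by_contra hdvd
    set g : ℤ := (Int.gcd q (2*p) : ℤ) with hg
    have hgq : g ∣ q := Int.gcd_dvd_left q (2*p)
    have hg2p : g ∣ 2*p := Int.gcd_dvd_right q (2*p)
    have hgpos : 0 < g := by
      rw [hg]
      exact_mod_cast Int.gcd_pos_of_ne_zero_left (2*p) (ne_of_gt hq)
    have hgne : g ≠ q := by
      intro h; apply hdvd; rw [← h]; exact hg2p
    -- membership of (g, 0)
    have hmemq : ((q, 0) : ℤ × ℤ) ∈ AddSubgroup.closure S :=
      AddSubgroup.subset_closure (by simp [hS])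
    have hmemv : ((p, 1) : ℤ × ℤ) ∈ AddSubgroup.closure S :=
      AddSubgroup.subset_closure (by simp [hS])
    have hmemw : ((p, -1) : ℤ × ℤ) ∈ AddSubgroup.closure S :=
      AddSubgroup.subset_closure (by simp [hS])
    set a := Int.gcdA q (2*p)
    set b := Int.gcdB q (2*p)
    have hbez : g = q * a + (2*p) * b := Int.gcd_eq_gcd_ab q (2*p)
    have hmemg : ((g, 0) : ℤ × ℤ) ∈ AddSubgroup.closure S := by
      have : ((g, 0) : ℤ × ℤ) = a • ((q, 0) : ℤ × ℤ) + b • ((p, 1) : ℤ × ℤ)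
          + b • ((p, -1) : ℤ × ℤ) := by
        simp [Prod.ext_iff, smul_eq_mul]
        rw [hbez]; ring
      rw [this]
      exact AddSubgroup.add_mem _ (AddSubgroup.add_mem _
        (AddSubgroup.zsmul_mem _ hmemq a) (AddSubgroup.zsmul_mem _ hmemv b))
        (AddSubgroup.zsmul_mem _ hmemw b)
    set n : ℤ := q / g with hn
    have hng : n * g = q := Int.ediv_mul_cancel hgq
    have heq : ((q, 0) : ℤ × ℤ) = n • ((g, 0) : ℤ × ℤ) := by
      simp [Prod.ext_iff, smul_eq_mul, hng.symm]
    rcases H n (g, 0) hmemg heq with h1 | h1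
    · apply hgne; rw [← hng, h1, one_mul]
    · have : g = -q := by rw [← hng, h1]; ring
      omega
  · intro hdvd n h hmem heq
    have key : ∀ x ∈ AddSubgroup.closure S, q ∣ x.1 - x.2 * p := by
      intro x hx
      induction hx using AddSubgroup.closure_induction with
      | mem x hx =>
        rcases hx with rfl | rfl | rfl
        · simp
        · simp
        · simpa [two_mul] using hdvd
      | zero => simp
      | add x y _ _ hx hy =>
        have : (x + y).1 - (x + y).2 * p = (x.1 - x.2 * p) + (y.1 - y.2 * p) := by
          simp; ring
        rw [this]; exact dvd_add hx hy
      | neg x _ hx =>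
        have : (-x).1 - (-x).2 * p = -(x.1 - x.2 * p) := by simp; ring
        rw [this]; exact dvd_neg.mpr hx
    have h2 : n * h.2 = 0 := by
      have := congrArg Prod.snd heq
      simpa [smul_eq_mul] using this.symm
    have h1 : n * h.1 = q := by
      have := congrArg Prod.fst heq
      simpa [smul_eq_mul] using this.symm
    have hn0 : n ≠ 0 := by rintro rfl; simp at h1; omega
    have hh2 : h.2 = 0 := by
      rcases mul_eq_zero.mp h2 with h | h
      · exact absurd h hn0
      · exact h
    have hqh1 : q ∣ h.1 := by simpa [hh2] using key h hmem
    rcases hqh1 with ⟨m, hm⟩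
    have : n * m = 1 := by
      have : n * (q * m) = q := by rw [← hm]; exact h1
      have hq0 : q ≠ 0 := ne_of_gt hq
      have := mul_left_cancel₀ hq0 (by linarith [this] : q * (n * m) = q * 1)
      exact this
    exact Int.isUnit_iff.mp (IsUnit.of_mul_eq_one m this)
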